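/- For −1 ≤ m ≤ n, the truncated coupled sum differences satisfy E[(Z̄_n − Z̄_m)²] = E[(Y_m − Y_n)²]/q_{m+1} + ∑_{i=m+1}^{n} E[(Y_i − Y_n)²] (1/q_{i+1} − 1/q_i). -/

import Mathlib

open MeasureTheory ProbabilityTheory Filter

/-- The increments `Δ_k = Y_k - Y_{k-1}` with the convention `Y_{-1} = 0`. -/
noncomputable def diffSeq {Ω : Type*} (Y : ℕ → Ω → ℝ) : ℕ → Ω → ℝ :=
  fun k ω => Y k ω - if k = 0 then 0 else Y (k - 1) ω

/-- `Y` indexed by integers, with `Y_j = 0` for `j < 0`. -/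
noncomputable def YInt {Ω : Type*} (Y : ℕ → Ω → ℝ) : ℤ → Ω → ℝ :=
  fun j ω => if j < 0 then 0 else Y j.toNat ω

/-- `Z̄_n = ∑_{k=0}^{n ∧ N} (Y_k - Y_{k-1}) / q_k`, with `Z̄_{-1} = 0`. -/
noncomputable def coupledSumTrunc {Ω : Type*} (Y : ℕ → Ω → ℝ) (q : ℕ → ℝ)
    (N : Ω → ℕ) : ℤ → Ω → ℝ :=
  fun j ω => if j < 0 then 0
    else ∑ k ∈ Finset.range (min j.toNat (N ω) + 1), diffSeq Y k ω / q k

noncomputable def prevY {Ω : Type*} (Y : ℕ → Ω → ℝ) : ℕ → Ω → ℝ :=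
  fun k ω => if k = 0 then 0 else Y (k - 1) ω

lemma diffSeq_eq {Ω : Type*} (Y : ℕ → Ω → ℝ) (k : ℕ) :
    diffSeq Y k = fun ω => Y k ω - prevY Y k ω := rfl

lemma memL2_mul_integrable {Ω : Type*} [MeasurableSpace Ω] {μ : Measure Ω}
    {f g : Ω → ℝ} (hf : MemLp f 2 μ) (hg : MemLp g 2 μ) :
    Integrable (fun ω => f ω * g ω) μ := by
  have h : (fun ω => f ω * g ω)
      = fun ω => ((f ω + g ω) ^ 2 - f ω ^ 2 - g ω ^ 2) / 2 := by funext ω; ring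
  rw [h]
  have h1 : Integrable (fun ω => (f ω + g ω) ^ 2) μ := by
    simpa using (hf.add hg).integrable_sq
  exact ((h1.sub hf.integrable_sq).sub hg.integrable_sq).div_const 2

lemma abel_sum (A Q : ℤ → ℝ) (m n : ℤ) (hmn : m ≤ n) :
    A m / Q (m + 1) + ∑ i ∈ Finset.Icc (m + 1) n, A i * (1 / Q (i + 1) - 1 / Q i)
      = A n / Q (n + 1) + ∑ i ∈ Finset.Icc (m + 1) n, (A (i - 1) - A i) / Q i := by
  obtain ⟨d, rfl⟩ : ∃ d : ℕ, n = m + d := ⟨(n - m).toNat, by omega⟩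
  clear hmn
  induction d with
  | zero =>
    rw [show m + ((0:ℕ):ℤ) = m by push_cast; ring]
    rw [show Finset.Icc (m + 1) m = ∅ from Finset.Icc_eq_empty (by omega)]
    simp
  | succ d ih =>
    have hstep : m + ((d + 1 : ℕ) : ℤ) = (m + d) + 1 := by push_cast; ring
    rw [hstep]
    have hins : Finset.Icc (m + 1) (m + d + 1) = insert (m + d + 1) (Finset.Icc (m + 1) (m + d)) := by
      ext x; simp only [Finset.mem_Icc, Finset.mem_insert]; omega
    have hni : (m + d + 1) ∉ Finset.Icc (m + 1) (m + d) := by simp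
    rw [hins, Finset.sum_insert hni, Finset.sum_insert hni, add_sub_cancel_right]
    linear_combination ih

lemma triangle_swap (a b : ℕ) (F : ℕ → ℕ → ℝ) :
    ∑ k ∈ Finset.Icc a b, ∑ l ∈ Finset.Ico a k, F k l
      = ∑ k ∈ Finset.Icc a b, ∑ l ∈ Finset.Ioc k b, F l k := by
  rw [Finset.sum_sigma', Finset.sum_sigma']
  refine Finset.sum_nbij' (fun p => ⟨p.2, p.1⟩) (fun p => ⟨p.2, p.1⟩) ?_ ?_ ?_ ?_ ?_ <;>
    rintro ⟨x, y⟩ h <;>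
    first
      | rfl
      | (simp only [Finset.mem_sigma, Finset.mem_Icc, Finset.mem_Ico, Finset.mem_Ioc] at h ⊢;
         omega)

lemma sum_split (a b k : ℕ) (h1 : a ≤ k) (h2 : k ≤ b) (G : ℕ → ℝ) :
    ∑ l ∈ Finset.Icc a b, G l
      = (∑ l ∈ Finset.Ico a k, G l) + G k + ∑ l ∈ Finset.Ioc k b, G l := by
  have hu : Finset.Icc a b = Finset.Ico a k ∪ insert k (Finset.Ioc k b) := by
    ext x
    simp only [Finset.mem_Icc, Finset.mem_union, Finset.mem_Ico, Finset.mem_insert,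
      Finset.mem_Ioc]
    omega
  have hd : Disjoint (Finset.Ico a k) (insert k (Finset.Ioc k b)) := by
    rw [Finset.disjoint_left]
    intro x hx hx'
    simp only [Finset.mem_Ico] at hx
    simp only [Finset.mem_insert, Finset.mem_Ioc] at hx'
    omega
  rw [hu, Finset.sum_union hd, Finset.sum_insert (by simp)]
  ring

lemma diff_telescope {Ω : Type*} (Y : ℕ → Ω → ℝ) (k b : ℕ) (h : k ≤ b) (ω : Ω) :
    ∑ l ∈ Finset.Ioc k b, diffSeq Y l ω = Y b ω - Y k ω := by
  induction b, h using Nat.le_induction with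
  | base => simp
  | succ b hb ih =>
    have hins : Finset.Ioc k (b + 1) = insert (b + 1) (Finset.Ioc k b) := by
      ext x; simp only [Finset.mem_Ioc, Finset.mem_insert]; omega
    rw [hins, Finset.sum_insert (by simp), ih]
    simp only [diffSeq, Nat.succ_ne_zero, if_false, Nat.add_sub_cancel]
    ring

theorem stmt_9 {Ω : Type*} [MeasurableSpace Ω] (μ : Measure Ω)
    [IsProbabilityMeasure μ]
    (Y : ℕ → Ω → ℝ) (hYmeas : ∀ n, Measurable (Y n))
    (hY : ∀ n, MemLp (Y n) 2 μ)
    (q : ℕ → ℝ) (hq0 : q 0 = 1) (hqdec : ∀ i, q (i + 1) ≤ q i)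
    (hqpos : ∀ i, 0 < q i) (hqlim : Tendsto q atTop (nhds 0))
    (N : Ω → ℕ) (hNmeas : Measurable N)
    (hindep : IndepFun (fun ω i => Y i ω) N μ)
    (hN : ∀ i, μ {ω | i ≤ N ω} = ENNReal.ofReal (q i))
    (m n : ℤ) (hm : -1 ≤ m) (hmn : m ≤ n) :
    ∫ ω, (coupledSumTrunc Y q N n ω - coupledSumTrunc Y q N m ω) ^ 2 ∂μ =
      (∫ ω, (YInt Y m ω - YInt Y n ω) ^ 2 ∂μ) / q (m + 1).toNat +
        ∑ i ∈ Finset.Icc (m + 1) n,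
          (∫ ω, (YInt Y i ω - YInt Y n ω) ^ 2 ∂μ) *
            (1 / q (i.toNat + 1) - 1 / q i.toNat) := by
  rcases lt_or_ge n 0 with hneg | hn
  · have hm1 : m = -1 := by omega
    have hn1 : n = -1 := by omega
    subst hm1 hn1
    rw [show Finset.Icc ((-1:ℤ) + 1) (-1) = ∅ from Finset.Icc_eq_empty (by norm_num)]
    simp [coupledSumTrunc, YInt]
  -- main case
  obtain ⟨a, ha⟩ : ∃ a, a = (m + 1).toNat := ⟨_, rfl⟩
  obtain ⟨b, hb⟩ : ∃ b, b = n.toNat := ⟨_, rfl⟩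
  have hWm : ∀ k, MemLp (prevY Y k) 2 μ := by
    intro k
    cases k with
    | zero => exact memLp_const 0
    | succ k => exact hY k
  have hWmeas : ∀ k, Measurable (prevY Y k) := by
    intro k
    cases k with
    | zero => exact measurable_const
    | succ k => exact hYmeas k
  have hΔ : ∀ k, MemLp (diffSeq Y k) 2 μ := fun k => (hY k).sub (hWm k)
  have hΔmeas : ∀ k, Measurable (diffSeq Y k) := fun k => (hYmeas k).sub (hWmeas k)
  have hcint : ∀ k l : ℕ, Integrable (fun ω => diffSeq Y k ω * diffSeq Y l ω) μ :=
    fun k l => memL2_mul_integrable (hΔ k) (hΔ l)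
  -- independence key lemma
  have key : ∀ j k l : ℕ,
      ∫ ω, (diffSeq Y k ω * diffSeq Y l ω) * (if j ≤ N ω then (1:ℝ) else 0) ∂μ
        = (∫ ω, diffSeq Y k ω * diffSeq Y l ω ∂μ) * q j := by
    intro j k l
    have hφ : Measurable (fun y : ℕ → ℝ =>
        (y k - if k = 0 then 0 else y (k - 1)) * (y l - if l = 0 then 0 else y (l - 1))) := by
      apply Measurable.mul <;>
      · apply Measurable.sub (measurable_pi_apply _)
        split_ifs
        · exact measurable_const
        · exact measurable_pi_apply _
    have hψ : Measurable (fun t : ℕ => if j ≤ t then (1:ℝ) else 0) := measurable_from_top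
    have hind : IndepFun (fun ω => diffSeq Y k ω * diffSeq Y l ω)
        (fun ω => if j ≤ N ω then (1:ℝ) else 0) μ := hindep.comp hφ hψ
    rw [hind.integral_fun_mul_eq_mul_integral ((hΔmeas k).mul (hΔmeas l)).aestronglyMeasurable
      ((hψ.comp hNmeas).aestronglyMeasurable)]
    congr 1
    have hset : MeasurableSet {ω | j ≤ N ω} := hNmeas MeasurableSpace.measurableSet_top
    have heq : (fun ω => if j ≤ N ω then (1:ℝ) else 0)
        = Set.indicator {ω | j ≤ N ω} (fun _ => (1:ℝ)) := by
      funext ω; by_cases h : j ≤ N ω <;> simp [Set.indicator_apply, h]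
    rw [heq, integral_indicator_const _ hset, measureReal_def, hN j, smul_eq_mul, mul_one,
      ENNReal.toReal_ofReal (hqpos j).le]
  set c : ℕ → ℕ → ℝ := fun k l => ∫ ω, diffSeq Y k ω * diffSeq Y l ω ∂μ with hc
  have hcsymm : ∀ k l, c k l = c l k := by
    intro k l
    simp only [hc]
    congr 1; funext ω; ring
  -- pointwise difference
  set e : ℕ → Ω → ℝ := fun k ω => if k ≤ N ω then diffSeq Y k ω / q k else 0 with hedef
  have hD : ∀ ω, coupledSumTrunc Y q N n ω - coupledSumTrunc Y q N m ω
      = ∑ k ∈ Finset.Icc a b, e k ω := by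
    intro ω
    simp only [hedef, coupledSumTrunc]
    rw [if_neg (not_lt.2 hn), ← Finset.sum_filter]
    rcases lt_or_ge m 0 with hm0 | hm0
    · rw [if_pos hm0, sub_zero]
      apply Finset.sum_congr _ (fun _ _ => rfl)
      ext k
      simp only [Finset.mem_range, Finset.mem_filter, Finset.mem_Icc]
      omega
    · rw [if_neg (not_lt.2 hm0)]
      have hsub : Finset.range (min m.toNat (N ω) + 1)
          ⊆ Finset.range (min n.toNat (N ω) + 1) := Finset.range_subset_range.2 (by omega)
      rw [← Finset.sum_sdiff_eq_sub hsub]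
      apply Finset.sum_congr _ (fun _ _ => rfl)
      ext k
      simp only [Finset.mem_sdiff, Finset.mem_range, Finset.mem_filter, Finset.mem_Icc]
      omega
  have hee_eq : ∀ (k l : ℕ) (ω : Ω), e k ω * e l ω
      = (diffSeq Y k ω * diffSeq Y l ω) * (if max k l ≤ N ω then (1:ℝ) else 0)
          * (q k * q l)⁻¹ := by
    intro k l ω
    simp only [hedef]
    rcases le_or_gt k (N ω) with h1 | h1 <;> rcases le_or_gt l (N ω) with h2 | h2
    · rw [if_pos h1, if_pos h2, if_pos (max_le h1 h2)]
      field_simp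
    · rw [if_pos h1, if_neg (not_le.2 h2), if_neg (by omega : ¬ max k l ≤ N ω)]; ring
    · rw [if_neg (not_le.2 h1), if_pos h2, if_neg (by omega : ¬ max k l ≤ N ω)]; ring
    · rw [if_neg (not_le.2 h1), if_neg (not_le.2 h2), if_neg (by omega : ¬ max k l ≤ N ω)]; ring
  have hee_int : ∀ k l : ℕ, Integrable (fun ω => e k ω * e l ω) μ := by
    intro k l
    have heq : (fun ω => e k ω * e l ω)
        = fun ω => Set.indicator {ω | max k l ≤ N ω}
            (fun ω => diffSeq Y k ω * diffSeq Y l ω * (q k * q l)⁻¹) ω := by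
      funext ω
      rw [hee_eq k l ω]
      by_cases h : max k l ≤ N ω
      · rw [if_pos h, Set.indicator_of_mem (show ω ∈ {ω | max k l ≤ N ω} from h)]
        ring
      · rw [if_neg h, Set.indicator_of_notMem (show ω ∉ {ω | max k l ≤ N ω} from h)]
        ring
    rw [heq]
    exact ((hcint k l).mul_const _).indicator (hNmeas MeasurableSpace.measurableSet_top)
  have hee_val : ∀ k l : ℕ, ∫ ω, e k ω * e l ω ∂μ = q (max k l) / (q k * q l) * c k l := by
    intro k l
    rw [show (fun ω => e k ω * e l ω)
        = fun ω => ((diffSeq Y k ω * diffSeq Y l ω) * (if max k l ≤ N ω then (1:ℝ) else 0))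
            * (q k * q l)⁻¹ from funext fun ω => hee_eq k l ω]
    rw [integral_mul_const, key (max k l) k l]
    simp only [hc]
    ring
  -- LHS as double sum
  have hL1 : ∫ ω, (coupledSumTrunc Y q N n ω - coupledSumTrunc Y q N m ω) ^ 2 ∂μ
      = ∑ k ∈ Finset.Icc a b, ∑ l ∈ Finset.Icc a b, q (max k l) / (q k * q l) * c k l := by
    rw [show (fun ω => (coupledSumTrunc Y q N n ω - coupledSumTrunc Y q N m ω) ^ 2)
        = fun ω => ∑ k ∈ Finset.Icc a b, ∑ l ∈ Finset.Icc a b, e k ω * e l ω from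
      funext fun ω => by rw [hD ω, sq, Finset.sum_mul_sum]]
    rw [integral_finset_sum _ (fun k _ => integrable_finset_sum _ (fun l _ => hee_int k l))]
    refine Finset.sum_congr rfl fun k _ => ?_
    rw [integral_finset_sum _ (fun l _ => hee_int k l)]
    exact Finset.sum_congr rfl fun l _ => hee_val k l
  -- restructure the double sum
  have hqne : ∀ k, q k ≠ 0 := fun k => (hqpos k).ne'
  have hdiv : ∀ (x : ℝ) (u v : ℕ), q u / (q u * q v) * x = x / q v := by
    intro x u v
    rw [div_mul_eq_mul_div]
    exact mul_div_mul_left x (q v) (hqne u)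
  have hL2 : ∑ k ∈ Finset.Icc a b, ∑ l ∈ Finset.Icc a b, q (max k l) / (q k * q l) * c k l
      = ∑ k ∈ Finset.Icc a b, (c k k + 2 * ∑ l ∈ Finset.Ioc k b, c k l) / q k := by
    have h1 : ∀ k ∈ Finset.Icc a b,
        ∑ l ∈ Finset.Icc a b, q (max k l) / (q k * q l) * c k l
          = (∑ l ∈ Finset.Ico a k, c k l / q l) + c k k / q k
              + ∑ l ∈ Finset.Ioc k b, c k l / q k := by
      intro k hk
      simp only [Finset.mem_Icc] at hk
      rw [sum_split a b k hk.1 hk.2]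
      congr 1
      · congr 1
        · refine Finset.sum_congr rfl fun l hl => ?_
          simp only [Finset.mem_Ico] at hl
          rw [max_eq_left (by omega : l ≤ k)]
          exact hdiv _ k l
        · rw [max_self]
          exact hdiv _ k k
      · refine Finset.sum_congr rfl fun l hl => ?_
        simp only [Finset.mem_Ioc] at hl
        rw [max_eq_right (by omega : k ≤ l)]
        rw [mul_comm (q k) (q l)]
        exact hdiv _ l k
    rw [Finset.sum_congr rfl h1]
    rw [Finset.sum_add_distrib, Finset.sum_add_distrib]
    rw [triangle_swap a b (fun k l => c k l / q l)]
    have h2 : ∀ k ∈ Finset.Icc a b,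
        ∑ l ∈ Finset.Ioc k b, c l k / q k = ∑ l ∈ Finset.Ioc k b, c k l / q k := by
      intro k _
      exact Finset.sum_congr rfl fun l _ => by rw [hcsymm l k]
    rw [Finset.sum_congr rfl h2]
    rw [← Finset.sum_add_distrib, ← Finset.sum_add_distrib]
    refine Finset.sum_congr rfl fun k _ => ?_
    simp only [← Finset.sum_div]
    rw [← add_div, ← add_div]
    congr 1
    ring
  -- per-k identification with integrals
  have hstep : ∀ k : ℕ, k ≤ b → c k k + 2 * ∑ l ∈ Finset.Ioc k b, c k l
      = (∫ ω, (prevY Y k ω - Y b ω) ^ 2 ∂μ) - ∫ ω, (Y k ω - Y b ω) ^ 2 ∂μ := by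
    intro k hkb
    have hsum : ∑ l ∈ Finset.Ioc k b, c k l
        = ∫ ω, diffSeq Y k ω * (Y b ω - Y k ω) ∂μ := by
      simp only [hc]
      rw [← integral_finset_sum _ (fun l _ => hcint k l)]
      congr 1
      funext ω
      rw [← Finset.mul_sum, diff_telescope Y k b hkb ω]
    have hI2 : Integrable (fun ω => diffSeq Y k ω * (Y b ω - Y k ω)) μ :=
      memL2_mul_integrable (hΔ k) ((hY b).sub (hY k))
    have hcomb : ∫ ω, (diffSeq Y k ω * diffSeq Y k ω
          + 2 * (diffSeq Y k ω * (Y b ω - Y k ω))) ∂μ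
        = (∫ ω, diffSeq Y k ω * diffSeq Y k ω ∂μ)
            + 2 * ∫ ω, diffSeq Y k ω * (Y b ω - Y k ω) ∂μ := by
      rw [integral_add (hcint k k) (hI2.const_mul 2), integral_const_mul]
    have hcomb2 : ∫ ω, (diffSeq Y k ω * diffSeq Y k ω
          + 2 * (diffSeq Y k ω * (Y b ω - Y k ω))) ∂μ
        = ∫ ω, ((prevY Y k ω - Y b ω) ^ 2 - (Y k ω - Y b ω) ^ 2) ∂μ := by
      congr 1
      funext ω
      simp only [diffSeq_eq]
      ring
    have hcomb3 : ∫ ω, ((prevY Y k ω - Y b ω) ^ 2 - (Y k ω - Y b ω) ^ 2) ∂μ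
        = (∫ ω, (prevY Y k ω - Y b ω) ^ 2 ∂μ) - ∫ ω, (Y k ω - Y b ω) ^ 2 ∂μ :=
      integral_sub ((hWm k).sub (hY b)).integrable_sq ((hY k).sub (hY b)).integrable_sq
    rw [hsum]
    simp only [hc]
    rw [← hcomb, hcomb2, hcomb3]
  -- RHS manipulation
  have hRHS : (∫ ω, (YInt Y m ω - YInt Y n ω) ^ 2 ∂μ) / q (m + 1).toNat
      + ∑ i ∈ Finset.Icc (m + 1) n,
          (∫ ω, (YInt Y i ω - YInt Y n ω) ^ 2 ∂μ) * (1 / q (i.toNat + 1) - 1 / q i.toNat)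
      = ∑ k ∈ Finset.Icc a b,
          ((∫ ω, (prevY Y k ω - Y b ω) ^ 2 ∂μ) - ∫ ω, (Y k ω - Y b ω) ^ 2 ∂μ) / q k := by
    have habel := abel_sum (fun i => ∫ ω, (YInt Y i ω - YInt Y n ω) ^ 2 ∂μ)
      (fun i => q i.toNat) m n hmn
    have hq1 : ∑ i ∈ Finset.Icc (m + 1) n,
          (∫ ω, (YInt Y i ω - YInt Y n ω) ^ 2 ∂μ) * (1 / q (i.toNat + 1) - 1 / q i.toNat)
        = ∑ i ∈ Finset.Icc (m + 1) n,
          (∫ ω, (YInt Y i ω - YInt Y n ω) ^ 2 ∂μ) * (1 / q (i + 1).toNat - 1 / q i.toNat) := by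
      refine Finset.sum_congr rfl fun i hi => ?_
      simp only [Finset.mem_Icc] at hi
      rw [show (i + 1).toNat = i.toNat + 1 by omega]
    rw [hq1, habel]
    have hAn : (∫ ω, (YInt Y n ω - YInt Y n ω) ^ 2 ∂μ) = 0 := by simp
    rw [hAn, zero_div, zero_add]
    refine Finset.sum_nbij' (fun i => i.toNat) (fun k => (k : ℤ)) ?_ ?_ ?_ ?_ ?_
    · intro i hi
      simp only [Finset.mem_Icc] at hi ⊢
      omega
    · intro k hk
      simp only [Finset.mem_Icc] at hk ⊢
      omega
    · intro i hi
      simp only [Finset.mem_Icc] at hi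
      show ((i.toNat : ℤ)) = i
      omega
    · intro k hk
      simp only [Finset.mem_Icc] at hk
      show ((k : ℤ)).toNat = k
      omega
    · intro i hi
      simp only [Finset.mem_Icc] at hi
      have hYn : (fun ω => YInt Y n ω) = fun ω => Y b ω := by
        funext ω; simp only [YInt, if_neg (not_lt.2 hn), hb]
      have hYi : ∀ ω, YInt Y i ω = Y i.toNat ω := by
        intro ω; simp only [YInt, if_neg (not_lt.2 (by omega : (0:ℤ) ≤ i))]
      have hYim : ∀ ω, YInt Y (i - 1) ω = prevY Y i.toNat ω := by
        intro ω
        rcases eq_or_lt_of_le (show (0:ℤ) ≤ i by omega) with h0 | h0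
        · rw [← h0]
          simp [YInt, prevY]
        · rw [show i.toNat = (i.toNat - 1) + 1 by omega]
          simp only [YInt, prevY, if_neg (by omega : ¬ (i - 1 : ℤ) < 0),
            Nat.succ_ne_zero, if_false, Nat.add_sub_cancel]
          congr 2
          omega
      congr 1
      · congr 1
        · congr 1
          funext ω
          rw [hYim ω]
          rw [show YInt Y n ω = Y b ω from congrFun hYn ω]
        · congr 1
          funext ω
          rw [hYi ω, show YInt Y n ω = Y b ω from congrFun hYn ω]
  rw [hL1, hL2, hRHS]
  refine Finset.sum_congr rfl fun k hk => ?_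
  simp only [Finset.mem_Icc] at hk
  rw [hstep k hk.2]
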